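/- arXiv:2205.01926 — 3 statements merged into one kernel-verified Lean document; each statement's English description precedes it below -/
import Mathlib

section
/- Let (A, τ, φ) be a conditional non-commutative probability space with unital subalgebras A₁, A₂ conditionally free with respect to (τ, φ). Assume φ coincides with τ on A₂, and let I₁ be an ideal of A₁ with I₁ ⊂ ker τ. Then the pair (I₁, A₂) is monotonically independent with respect to φ. -/
set_option linter.unusedSectionVars false
set_option maxHeartbeats 1000000

open scoped BigOperators

namespace CFMI

def Pr {M : Type*} [Monoid M] (f : ℕ → M) (n : ℕ) : M := ((List.range n).map f).prod

variable {M : Type*} [Monoid M]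

lemma Pr_zero (f : ℕ → M) : Pr f 0 = 1 := rfl

lemma Pr_succ (f : ℕ → M) (n : ℕ) : Pr f (n + 1) = Pr f n * f n := by
  simp [Pr, List.range_succ]

lemma Pr_congr {f g : ℕ → M} {n : ℕ} (h : ∀ k < n, f k = g k) : Pr f n = Pr g n := by
  unfold Pr
  congr 1
  exact List.map_congr_left (fun k hk => h k (List.mem_range.mp hk))

lemma Pr_add (f : ℕ → M) (j m : ℕ) :
    Pr f (j + m) = Pr f j * Pr (fun k => f (j + k)) m := by
  simp only [Pr, List.range_add, List.map_append, List.prod_append, List.map_map]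
  rfl

lemma Pr_split (f : ℕ → M) {j n : ℕ} (h : j < n) :
    Pr f n = Pr f j * (f j * Pr (fun k => f (j + 1 + k)) (n - j - 1)) := by
  have h1 : n = j + (1 + (n - j - 1)) := by omega
  rw [h1, Pr_add, Pr_add]
  have h2 : Pr (fun k => f (j + k)) 1 = f (j + 0) := by
    simp [Pr, List.range_succ]
  rw [h2, Nat.add_zero]
  have h3 : Pr (fun k => f (j + (1 + k))) (n - j - 1)
      = Pr (fun k => f (j + 1 + k)) (n - j - 1) := by
    apply Pr_congr
    intro k _
    congr 1
    omega
  rw [h3]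
  simp [mul_assoc]

lemma prod_del (g : ℕ → ℂ) {j n : ℕ} (hj : j < n) :
    ∏ k ∈ Finset.range n, g k =
      ((∏ k ∈ Finset.range j, g k) * g j) * ∏ k ∈ Finset.range (n - j - 1), g (j + 1 + k) := by
  have h1 : n = (j + 1) + (n - j - 1) := by omega
  conv_lhs => rw [h1]
  rw [Finset.prod_range_add, Finset.prod_range_succ]


section Alt
variable {M : Type*} [Monoid M] (a b : ℕ → M)

/-- the alternating sequence `b 0, a 0, b 1, a 1, ...` -/
def alt (k : ℕ) : M := if k % 2 = 0 then b (k / 2) else a (k / 2)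

/-- the alternating sequence `a 0, b 1, a 1, b 2, ...` -/
def alt' (k : ℕ) : M := if k % 2 = 1 then b ((k + 1) / 2) else a (k / 2)

lemma alt_even (m : ℕ) : alt a b (2 * m) = b m := by
  have h1 : 2 * m % 2 = 0 := by omega
  have h2 : 2 * m / 2 = m := by omega
  simp [alt, h1, h2]

lemma alt_odd (m : ℕ) : alt a b (2 * m + 1) = a m := by
  have h1 : (2 * m + 1) % 2 = 1 := by omega
  have h2 : (2 * m + 1) / 2 = m := by omega
  simp [alt, h1, h2]

lemma alt'_even (m : ℕ) : alt' a b (2 * m) = a m := by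
  have h1 : 2 * m % 2 = 0 := by omega
  have h2 : 2 * m / 2 = m := by omega
  simp [alt', h1, h2]

lemma alt'_odd (m : ℕ) : alt' a b (2 * m + 1) = b (m + 1) := by
  have h1 : (2 * m + 1) % 2 = 1 := by omega
  have h2 : (2 * m + 1 + 1) / 2 = m + 1 := by omega
  simp [alt', h1, h2]

lemma EPr1 : ∀ m, Pr (alt a b) (2 * m) = Pr (fun k => b k * a k) m := by
  intro m
  induction m with
  | zero => rfl
  | succ m IH =>
      rw [show 2 * (m + 1) = (2 * m + 1) + 1 from by omega, Pr_succ, Pr_succ,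
        alt_even, alt_odd, Pr_succ, IH, mul_assoc]

lemma EPr1' (m : ℕ) : Pr (alt a b) (2 * m + 1) = Pr (fun k => b k * a k) m * b m := by
  rw [Pr_succ, EPr1, alt_even]

lemma EPr2 : ∀ m, Pr (alt' a b) (2 * m + 1) = a 0 * Pr (fun k => b (k + 1) * a (k + 1)) m := by
  intro m
  induction m with
  | zero =>
      rw [Pr_succ, Pr_zero, Pr_zero]
      have := alt'_even a b 0
      simp only [Nat.mul_zero] at this
      rw [this, one_mul, mul_one]
  | succ m IH =>
      rw [show 2 * (m + 1) + 1 = (2 * m + 1) + 1 + 1 from by omega, Pr_succ, Pr_succ, IH,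
        show (2 * m + 1) + 1 = 2 * (m + 1) from by omega, alt'_even,
        show 2 * m + 1 = 2 * m + 1 from rfl, alt'_odd, Pr_succ, mul_assoc, mul_assoc]

lemma EPr2' (m : ℕ) :
    Pr (alt' a b) (2 * m + 2) = a 0 * Pr (fun k => b (k + 1) * a (k + 1)) m * b (m + 1) := by
  rw [show 2 * m + 2 = (2 * m + 1) + 1 from by omega, Pr_succ, EPr2, alt'_odd]

end Alt


lemma Pr_split2 {M : Type*} [Monoid M] (f : ℕ → M) {j n : ℕ} (h1 : j + 1 < n) :
    Pr f n = Pr f j * (f j * (f (j + 1) * Pr (fun k => f (j + 2 + k)) (n - j - 2))) := by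
  rw [Pr_split f (show j < n by omega),
    Pr_split (fun k => f (j + 1 + k)) (show 0 < n - j - 1 by omega), Pr_zero, one_mul]
  have e : Pr (fun k => f (j + 1 + (0 + 1 + k))) ((n - j - 1) - 0 - 1)
      = Pr (fun k => f (j + 2 + k)) (n - j - 2) := by
    rw [show (n - j - 1) - 0 - 1 = n - j - 2 from by omega]
    exact Pr_congr (fun k _ => by congr 1; omega)
  rw [e, show j + 1 + 0 = j + 1 from rfl]

def CFree {A : Type*} [Ring A] [Algebra ℂ A] (τ φ : A →ₗ[ℂ] ℂ)
    (A₁ A₂ : Subalgebra ℂ A) : Prop :=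
  ∀ (n : ℕ) (a : ℕ → A) (i : ℕ → Bool), 1 < n →
    (∀ k < n, a k ∈ (if i k then A₁ else A₂)) →
    (∀ k, k + 1 < n → i k ≠ i (k + 1)) →
    (∀ k < n, τ (a k) = 0) →
    τ (((List.range n).map a).prod) = 0 ∧
    φ (((List.range n).map a).prod) = ∏ k ∈ Finset.range n, φ (a k)

section Main

variable {A : Type*} [Ring A] [Algebra ℂ A]
variable (τ φ : A →ₗ[ℂ] ℂ) (A₁ A₂ : Subalgebra ℂ A) (I₁ : Set A)

theorem Ulem
    (hτ1 : τ 1 = 1)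
    (hcfree : CFree τ φ A₁ A₂)
    (hφτ : ∀ x ∈ A₂, φ x = τ x)
    (hI₁sub : I₁ ⊆ (A₁ : Set A))
    (hI₁mul : ∀ x ∈ I₁, ∀ y ∈ A₁, y * x ∈ I₁ ∧ x * y ∈ I₁)
    (hI₁ker : ∀ x ∈ I₁, τ x = 0) :
    ∀ n, 0 < n → ∀ a b : ℕ → A, (∀ k < n, a k ∈ I₁) → (∀ k < n, b k ∈ A₂) →
      φ (Pr (fun k => b k * a k) n) = φ (Pr a n) * ∏ k ∈ Finset.range n, φ (b k) := by
  intro n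
  induction n using Nat.strong_induction_on with
  | _ n IH =>
  intro hn a b ha hb
  suffices key : ∀ j (b : ℕ → A), (∀ k < n, b k ∈ A₂) →
      (∀ k, j ≤ k → k < n → τ (b k) = 0) →
      φ (Pr (fun k => b k * a k) n) = φ (Pr a n) * ∏ k ∈ Finset.range n, φ (b k) from
    key n b hb (fun k h1 h2 => absurd h2 (by omega))
  intro j
  induction j with
  | zero =>
    intro b hb hc
    have hb0 : φ (b 0) = 0 := by rw [hφτ _ (hb 0 hn), hc 0 (Nat.zero_le _) hn]
    have h1 : φ (Pr (alt a b) (2 * n)) = ∏ k ∈ Finset.range (2 * n), φ (alt a b k) := by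
      refine (hcfree (2 * n) (alt a b) (fun k => decide (k % 2 = 1)) (by omega) ?_ ?_ ?_).2
      · intro k hk
        rcases Nat.mod_two_eq_zero_or_one k with hk2 | hk2
        · have h3 : decide (k % 2 = 1) = false := by simp [hk2]
          have h4 : alt a b k = b (k / 2) := by simp [alt, hk2]
          simp only [h3, Bool.false_eq_true, if_false, h4]
          exact hb _ (by omega)
        · have h3 : decide (k % 2 = 1) = true := by simp [hk2]
          have h4 : alt a b k = a (k / 2) := by simp [alt, hk2]
          simp only [h3, if_true, h4]
          exact hI₁sub (ha _ (by omega))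
      · intro k _
        simp only [ne_eq, decide_eq_decide]
        omega
      · intro k hk
        rcases Nat.mod_two_eq_zero_or_one k with hk2 | hk2
        · rw [show alt a b k = b (k / 2) from by simp [alt, hk2]]
          exact hc _ (Nat.zero_le _) (by omega)
        · rw [show alt a b k = a (k / 2) from by simp [alt, hk2]]
          exact hI₁ker _ (ha _ (by omega))
    rw [← EPr1 a b n, h1,
      Finset.prod_eq_zero (i := 0) (Finset.mem_range.mpr (by omega))
        (by rw [show alt a b 0 = b 0 from by simp [alt]]; exact hb0),
      Finset.prod_eq_zero (i := 0) (Finset.mem_range.mpr hn) hb0, mul_zero]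
  | succ j IHj =>
    intro b hb hc
    by_cases hjn : j < n
    swap
    · exact IHj b hb (fun k h1 h2 => hc k (by omega) h2)
    set β := τ (b j) with hβ
    set b' : ℕ → A := Function.update b j (b j - β • 1) with hb'def
    have hb'j : b' j = b j - β • 1 := Function.update_self _ _ _
    have hb'ne : ∀ k, k ≠ j → b' k = b k := fun k hk => Function.update_of_ne hk _ _
    have hb'mem : ∀ k < n, b' k ∈ A₂ := by
      intro k hk
      rcases eq_or_ne k j with rfl | hne
      · rw [hb'j]; exact A₂.sub_mem (hb _ hk) (A₂.smul_mem A₂.one_mem β)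
      · rw [hb'ne _ hne]; exact hb _ hk
    have hb'c : ∀ k, j ≤ k → k < n → τ (b' k) = 0 := by
      intro k h1 h2
      rcases eq_or_ne k j with rfl | hne
      · rw [hb'j, map_sub, map_smul, hτ1, smul_eq_mul, mul_one, sub_self]
      · rw [hb'ne _ hne]; exact hc k (by omega) h2
    have hφb'j : φ (b' j) = 0 := by
      rw [hφτ _ (hb'mem _ hjn), hb'c j le_rfl hjn]
    have hIH0' : φ (Pr (fun k => b' k * a k) n) = 0 := by
      rw [IHj b' hb'mem hb'c,
        Finset.prod_eq_zero (Finset.mem_range.mpr hjn) hφb'j, mul_zero]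
    have hsplit := Pr_split (fun k => b k * a k) hjn
    have hsplit' : Pr (fun k => b' k * a k) n
        = Pr (fun k => b k * a k) j *
          ((b j - β • 1) * a j * Pr (fun k => b (j + 1 + k) * a (j + 1 + k)) (n - j - 1)) := by
      rw [Pr_split _ hjn,
        Pr_congr (n := j) (fun k hk => by rw [hb'ne _ (by omega)] :
          ∀ k < j, b' k * a k = b k * a k),
        Pr_congr (n := n - j - 1) (fun k hk => by rw [hb'ne _ (by omega)] :
          ∀ k < n - j - 1, b' (j + 1 + k) * a (j + 1 + k) = b (j + 1 + k) * a (j + 1 + k)),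
        hb'j, mul_assoc]
    have hφbj : φ (b j) = β := by rw [hφτ _ (hb _ hjn)]
    have hdecomp : φ (Pr (fun k => b k * a k) n)
        = φ (Pr (fun k => b' k * a k) n)
          + β * φ (Pr (fun k => b k * a k) j *
              (a j * Pr (fun k => b (j + 1 + k) * a (j + 1 + k)) (n - j - 1))) := by
      rw [hsplit, hsplit']
      have e1 : b j * a j = (b j - β • 1) * a j + β • a j := by
        rw [sub_mul, smul_mul_assoc, one_mul, sub_add_cancel]
      have e2 : Pr (fun k => b k * a k) j *
            (b j * a j * Pr (fun k => b (j + 1 + k) * a (j + 1 + k)) (n - j - 1))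
          = Pr (fun k => b k * a k) j *
            ((b j - β • 1) * a j * Pr (fun k => b (j + 1 + k) * a (j + 1 + k)) (n - j - 1))
            + β • (Pr (fun k => b k * a k) j *
              (a j * Pr (fun k => b (j + 1 + k) * a (j + 1 + k)) (n - j - 1))) := by
        rw [e1, add_mul, smul_mul_assoc, mul_add, mul_smul_comm]
      rw [e2, map_add, map_smul, smul_eq_mul]
    rw [hdecomp, hIH0', zero_add]
    rcases Nat.eq_zero_or_pos j with rfl | hj1
    · -- j = 0
      rcases eq_or_lt_of_le (show 1 ≤ n from hn) with hn1 | hn2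
      · -- n = 1
        have hn1' : n = 1 := hn1.symm
        subst hn1'
        simp only [Pr_zero, one_mul, Nat.sub_self, mul_one]
        rw [Pr_succ, Pr_zero, one_mul, Finset.prod_range_one, hφbj]
        ring
      · -- n ≥ 2
        have hb1 : φ (b 1) = 0 := by
          rw [hφτ _ (hb 1 (by omega)), hc 1 le_rfl (by omega)]
        have hword : Pr (fun k => b k * a k) 0 *
            (a 0 * Pr (fun k => b (0 + 1 + k) * a (0 + 1 + k)) (n - 0 - 1))
            = Pr (alt' a b) (2 * (n - 1) + 1) := by
          rw [Pr_zero, one_mul, EPr2]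
          congr 1
          apply Pr_congr
          intro k _
          congr 2 <;> omega
        have h2 : φ (Pr (alt' a b) (2 * (n - 1) + 1))
            = ∏ k ∈ Finset.range (2 * (n - 1) + 1), φ (alt' a b k) := by
          refine (hcfree _ (alt' a b) (fun k => decide (k % 2 = 0)) (by omega) ?_ ?_ ?_).2
          · intro k hk
            rcases Nat.mod_two_eq_zero_or_one k with hk2 | hk2
            · have h3 : decide (k % 2 = 0) = true := by simp [hk2]
              have h4 : alt' a b k = a (k / 2) := by simp [alt', hk2]
              simp only [h3, if_true, h4]
              exact hI₁sub (ha _ (by omega))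
            · have h3 : decide (k % 2 = 0) = false := by simp [hk2]
              have h4 : alt' a b k = b ((k + 1) / 2) := by simp [alt', hk2]
              simp only [h3, Bool.false_eq_true, if_false, h4]
              exact hb _ (by omega)
          · intro k _
            simp only [ne_eq, decide_eq_decide]
            omega
          · intro k hk
            rcases Nat.mod_two_eq_zero_or_one k with hk2 | hk2
            · rw [show alt' a b k = a (k / 2) from by simp [alt', hk2]]
              exact hI₁ker _ (ha _ (by omega))
            · rw [show alt' a b k = b ((k + 1) / 2) from by simp [alt', hk2]]
              exact hc _ (by omega) (by omega)
        rw [hword, h2,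
          Finset.prod_eq_zero (i := 1) (Finset.mem_range.mpr (by omega))
            (by rw [show alt' a b 1 = b 1 from by simp [alt']]; exact hb1),
          Finset.prod_eq_zero (i := 1) (Finset.mem_range.mpr (by omega)) hb1,
          mul_zero, mul_zero]
    · -- j ≥ 1 : merge
      have hn2 : 2 ≤ n := by omega
      set a2 : ℕ → A := fun k =>
        if k < j - 1 then a k else if k = j - 1 then a (j - 1) * a j else a (k + 1) with ha2def
      set b2 : ℕ → A := fun k => if k < j then b k else b (k + 1) with hb2def
      have ha2mem : ∀ k < n - 1, a2 k ∈ I₁ := by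
        intro k hk
        simp only [ha2def]
        by_cases h1 : k < j - 1
        · rw [if_pos h1]; exact ha _ (by omega)
        · rw [if_neg h1]
          by_cases h2 : k = j - 1
          · rw [if_pos h2]
            exact (hI₁mul _ (ha j hjn) _ (hI₁sub (ha (j - 1) (by omega)))).1
          · rw [if_neg h2]; exact ha _ (by omega)
      have hb2mem : ∀ k < n - 1, b2 k ∈ A₂ := by
        intro k hk
        simp only [hb2def]
        by_cases h1 : k < j
        · rw [if_pos h1]; exact hb _ (by omega)
        · rw [if_neg h1]; exact hb _ (by omega)
      have hmerge : Pr (fun k => b k * a k) j *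
          (a j * Pr (fun k => b (j + 1 + k) * a (j + 1 + k)) (n - j - 1))
          = Pr (fun k => b2 k * a2 k) (n - 1) := by
        rw [Pr_split (fun k => b2 k * a2 k) (show j - 1 < n - 1 by omega)]
        have e1 : Pr (fun k => b2 k * a2 k) (j - 1) = Pr (fun k => b k * a k) (j - 1) := by
          apply Pr_congr
          intro k hk
          simp only [hb2def, ha2def]
          simp only [if_pos (show k < j by omega), if_pos (show k < j - 1 by omega)]
        have e2 : b2 (j - 1) * a2 (j - 1) = b (j - 1) * (a (j - 1) * a j) := by
          simp only [hb2def, ha2def]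
          simp only [if_pos (show j - 1 < j by omega), if_neg (lt_irrefl (j - 1)),
            if_pos rfl, if_true]
        have e3 : Pr (fun k => b2 (j - 1 + 1 + k) * a2 (j - 1 + 1 + k)) ((n - 1) - (j - 1) - 1)
            = Pr (fun k => b (j + 1 + k) * a (j + 1 + k)) (n - j - 1) := by
          rw [show (n - 1) - (j - 1) - 1 = n - j - 1 from by omega]
          apply Pr_congr
          intro k hk
          simp only [hb2def, ha2def]
          rw [if_neg (show ¬ (j - 1 + 1 + k < j) by omega),
            if_neg (show ¬ (j - 1 + 1 + k < j - 1) by omega),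
            if_neg (show ¬ (j - 1 + 1 + k = j - 1) by omega)]
          congr 2 <;> omega
        rw [e1, e2, e3]
        have e4 : Pr (fun k => b k * a k) j
            = Pr (fun k => b k * a k) (j - 1) * (b (j - 1) * a (j - 1)) := by
          conv_lhs => rw [show j = (j - 1) + 1 from by omega, Pr_succ]
        rw [e4]
        simp only [mul_assoc]
      have haprod : Pr a2 (n - 1) = Pr a n := by
        rw [Pr_split a2 (show j - 1 < n - 1 by omega),
          Pr_split2 a (show (j - 1) + 1 < n by omega)]
        have e1 : Pr a2 (j - 1) = Pr a (j - 1) := by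
          apply Pr_congr
          intro k hk
          simp only [ha2def]
          simp only [if_pos (show k < j - 1 by omega)]
        have e2 : a2 (j - 1) = a (j - 1) * a j := by
          simp only [ha2def]
          simp only [if_neg (lt_irrefl (j - 1)), if_pos rfl, if_true]
        have e3 : Pr (fun k => a2 (j - 1 + 1 + k)) ((n - 1) - (j - 1) - 1)
            = Pr (fun k => a (j - 1 + 2 + k)) (n - (j - 1) - 2) := by
          rw [show (n - 1) - (j - 1) - 1 = n - (j - 1) - 2 from by omega]
          apply Pr_congr
          intro k hk
          simp only [ha2def]
          rw [if_neg (show ¬ (j - 1 + 1 + k < j - 1) by omega),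
            if_neg (show ¬ (j - 1 + 1 + k = j - 1) by omega)]
          congr 1
          omega
        rw [e1, e2, e3, show j - 1 + 1 = j from by omega]
        simp only [mul_assoc]
      have hbprod : ∏ k ∈ Finset.range (n - 1), φ (b2 k)
          = (∏ k ∈ Finset.range j, φ (b k)) * ∏ k ∈ Finset.range (n - j - 1), φ (b (j + 1 + k)) := by
        rw [show n - 1 = j + (n - j - 1) from by omega, Finset.prod_range_add]
        congr 1
        · apply Finset.prod_congr rfl
          intro k hk
          simp only [hb2def]
          simp only [if_pos (show k < j from Finset.mem_range.mp hk)]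
        · apply Finset.prod_congr rfl
          intro k _
          simp only [hb2def]
          rw [if_neg (show ¬ (j + k < j) by omega)]
          congr 2
          omega
      rw [hmerge, IH (n - 1) (by omega) (by omega) a2 b2 ha2mem hb2mem, haprod, hbprod,
        prod_del (fun k => φ (b k)) hjn, hφbj]
      ring

theorem Plem
    (hτ1 : τ 1 = 1)
    (hcfree : CFree τ φ A₁ A₂)
    (hφτ : ∀ x ∈ A₂, φ x = τ x)
    (hI₁sub : I₁ ⊆ (A₁ : Set A))
    (hI₁mul : ∀ x ∈ I₁, ∀ y ∈ A₁, y * x ∈ I₁ ∧ x * y ∈ I₁)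
    (hI₁ker : ∀ x ∈ I₁, τ x = 0) :
    ∀ n, 0 < n → ∀ a b : ℕ → A, (∀ k < n, a k ∈ I₁) → (∀ k < n + 1, b k ∈ A₂) →
      φ (Pr (fun k => b k * a k) n * b n)
        = φ (Pr a n) * ∏ k ∈ Finset.range (n + 1), φ (b k) := by
  intro n
  induction n using Nat.strong_induction_on with
  | _ n IH =>
  intro hn a b ha hb
  suffices key : ∀ j (b : ℕ → A), (∀ k < n + 1, b k ∈ A₂) →
      (∀ k, j ≤ k → k < n + 1 → τ (b k) = 0) →
      φ (Pr (fun k => b k * a k) n * b n)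
        = φ (Pr a n) * ∏ k ∈ Finset.range (n + 1), φ (b k) from
    key (n + 1) b hb (fun k h1 h2 => absurd h2 (by omega))
  intro j
  induction j with
  | zero =>
    intro b hb hc
    have hb0 : φ (b 0) = 0 := by rw [hφτ _ (hb 0 (by omega)), hc 0 (Nat.zero_le _) (by omega)]
    have h1 : φ (Pr (alt a b) (2 * n + 1)) = ∏ k ∈ Finset.range (2 * n + 1), φ (alt a b k) := by
      refine (hcfree (2 * n + 1) (alt a b) (fun k => decide (k % 2 = 1)) (by omega) ?_ ?_ ?_).2
      · intro k hk
        rcases Nat.mod_two_eq_zero_or_one k with hk2 | hk2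
        · have h3 : decide (k % 2 = 1) = false := by simp [hk2]
          have h4 : alt a b k = b (k / 2) := by simp [alt, hk2]
          simp only [h3, Bool.false_eq_true, if_false, h4]
          exact hb _ (by omega)
        · have h3 : decide (k % 2 = 1) = true := by simp [hk2]
          have h4 : alt a b k = a (k / 2) := by simp [alt, hk2]
          simp only [h3, if_true, h4]
          exact hI₁sub (ha _ (by omega))
      · intro k _
        simp only [ne_eq, decide_eq_decide]
        omega
      · intro k hk
        rcases Nat.mod_two_eq_zero_or_one k with hk2 | hk2
        · rw [show alt a b k = b (k / 2) from by simp [alt, hk2]]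
          exact hc _ (Nat.zero_le _) (by omega)
        · rw [show alt a b k = a (k / 2) from by simp [alt, hk2]]
          exact hI₁ker _ (ha _ (by omega))
    rw [← EPr1' a b n, h1,
      Finset.prod_eq_zero (i := 0) (Finset.mem_range.mpr (by omega))
        (by rw [show alt a b 0 = b 0 from by simp [alt]]; exact hb0),
      Finset.prod_eq_zero (i := 0) (Finset.mem_range.mpr (by omega)) hb0, mul_zero]
  | succ j IHj =>
    intro b hb hc
    by_cases hjn : j < n + 1
    swap
    · exact IHj b hb (fun k h1 h2 => hc k (by omega) h2)
    set β := τ (b j) with hβ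
    set b' : ℕ → A := Function.update b j (b j - β • 1) with hb'def
    have hb'j : b' j = b j - β • 1 := Function.update_self _ _ _
    have hb'ne : ∀ k, k ≠ j → b' k = b k := fun k hk => Function.update_of_ne hk _ _
    have hb'mem : ∀ k < n + 1, b' k ∈ A₂ := by
      intro k hk
      rcases eq_or_ne k j with rfl | hne
      · rw [hb'j]; exact A₂.sub_mem (hb _ hk) (A₂.smul_mem A₂.one_mem β)
      · rw [hb'ne _ hne]; exact hb _ hk
    have hb'c : ∀ k, j ≤ k → k < n + 1 → τ (b' k) = 0 := by
      intro k h1 h2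
      rcases eq_or_ne k j with rfl | hne
      · rw [hb'j, map_sub, map_smul, hτ1, smul_eq_mul, mul_one, sub_self]
      · rw [hb'ne _ hne]; exact hc k (by omega) h2
    have hφb'j : φ (b' j) = 0 := by
      rw [hφτ _ (hb'mem _ hjn), hb'c j le_rfl hjn]
    have hIH0' : φ (Pr (fun k => b' k * a k) n * b' n) = 0 := by
      rw [IHj b' hb'mem hb'c,
        Finset.prod_eq_zero (Finset.mem_range.mpr hjn) hφb'j, mul_zero]
    have hφbj : φ (b j) = β := by rw [hφτ _ (hb _ hjn)]
    by_cases hjn2 : j = n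
    · -- split the last b
      subst hjn2
      have e0 : Pr (fun k => b' k * a k) j = Pr (fun k => b k * a k) j :=
        Pr_congr (fun k hk => by rw [hb'ne _ (by omega)])
      have e1 : Pr (fun k => b k * a k) j * b j
          = Pr (fun k => b k * a k) j * (b j - β • 1) + β • Pr (fun k => b k * a k) j := by
        rw [mul_sub, mul_smul_comm, mul_one, sub_add_cancel]
      rw [e1, map_add, map_smul, smul_eq_mul, show Pr (fun k => b k * a k) j * (b j - β • 1)
          = Pr (fun k => b' k * a k) j * b' j from by rw [e0, hb'j], hIH0', zero_add]
      rw [Ulem τ φ A₁ A₂ I₁ hτ1 hcfree hφτ hI₁sub hI₁mul hI₁ker j hn a b ha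
        (fun k hk => hb k (by omega)), Finset.prod_range_succ, hφbj]
      ring
    · -- j < n
      have hjn' : j < n := by omega
      have hb'n : b' n = b n := hb'ne _ (by omega)
      have hsplit := Pr_split (fun k => b k * a k) hjn'
      have hsplit' : Pr (fun k => b' k * a k) n
          = Pr (fun k => b k * a k) j *
            ((b j - β • 1) * a j * Pr (fun k => b (j + 1 + k) * a (j + 1 + k)) (n - j - 1)) := by
        rw [Pr_split _ hjn',
          Pr_congr (n := j) (fun k hk => by rw [hb'ne _ (by omega)] :
            ∀ k < j, b' k * a k = b k * a k),
          Pr_congr (n := n - j - 1) (fun k hk => by rw [hb'ne _ (by omega)] :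
            ∀ k < n - j - 1, b' (j + 1 + k) * a (j + 1 + k) = b (j + 1 + k) * a (j + 1 + k)),
          hb'j, mul_assoc]
      have hdecomp : φ (Pr (fun k => b k * a k) n * b n)
          = φ (Pr (fun k => b' k * a k) n * b' n)
            + β * φ (Pr (fun k => b k * a k) j *
                (a j * Pr (fun k => b (j + 1 + k) * a (j + 1 + k)) (n - j - 1)) * b n) := by
        rw [hb'n, hsplit, hsplit']
        have e1 : b j * a j = (b j - β • 1) * a j + β • a j := by
          rw [sub_mul, smul_mul_assoc, one_mul, sub_add_cancel]
        have e2 : Pr (fun k => b k * a k) j *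
              (b j * a j * Pr (fun k => b (j + 1 + k) * a (j + 1 + k)) (n - j - 1)) * b n
            = Pr (fun k => b k * a k) j *
              ((b j - β • 1) * a j * Pr (fun k => b (j + 1 + k) * a (j + 1 + k)) (n - j - 1)) * b n
              + β • (Pr (fun k => b k * a k) j *
                (a j * Pr (fun k => b (j + 1 + k) * a (j + 1 + k)) (n - j - 1)) * b n) := by
          rw [e1, add_mul, smul_mul_assoc, mul_add, mul_smul_comm, add_mul, smul_mul_assoc]
        rw [e2, map_add, map_smul, smul_eq_mul]
      rw [hdecomp, hIH0', zero_add]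
      rcases Nat.eq_zero_or_pos j with rfl | hj1
      · -- j = 0
        have hb1 : φ (b 1) = 0 := by
          rw [hφτ _ (hb 1 (by omega)), hc 1 le_rfl (by omega)]
        have hword : Pr (fun k => b k * a k) 0 *
            (a 0 * Pr (fun k => b (0 + 1 + k) * a (0 + 1 + k)) (n - 0 - 1)) * b n
            = Pr (alt' a b) (2 * (n - 1) + 2) := by
          rw [Pr_zero, one_mul, EPr2', show n - 1 + 1 = n from by omega]
          congr 2
          apply Pr_congr
          intro k _
          congr 2 <;> omega
        have h2 : φ (Pr (alt' a b) (2 * (n - 1) + 2))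
            = ∏ k ∈ Finset.range (2 * (n - 1) + 2), φ (alt' a b k) := by
          refine (hcfree _ (alt' a b) (fun k => decide (k % 2 = 0)) (by omega) ?_ ?_ ?_).2
          · intro k hk
            rcases Nat.mod_two_eq_zero_or_one k with hk2 | hk2
            · have h3 : decide (k % 2 = 0) = true := by simp [hk2]
              have h4 : alt' a b k = a (k / 2) := by simp [alt', hk2]
              simp only [h3, if_true, h4]
              exact hI₁sub (ha _ (by omega))
            · have h3 : decide (k % 2 = 0) = false := by simp [hk2]
              have h4 : alt' a b k = b ((k + 1) / 2) := by simp [alt', hk2]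
              simp only [h3, Bool.false_eq_true, if_false, h4]
              exact hb _ (by omega)
          · intro k _
            simp only [ne_eq, decide_eq_decide]
            omega
          · intro k hk
            rcases Nat.mod_two_eq_zero_or_one k with hk2 | hk2
            · rw [show alt' a b k = a (k / 2) from by simp [alt', hk2]]
              exact hI₁ker _ (ha _ (by omega))
            · rw [show alt' a b k = b ((k + 1) / 2) from by simp [alt', hk2]]
              exact hc _ (by omega) (by omega)
        rw [hword, h2,
          Finset.prod_eq_zero (i := 1) (Finset.mem_range.mpr (by omega))
            (by rw [show alt' a b 1 = b 1 from by simp [alt']]; exact hb1),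
          Finset.prod_eq_zero (i := 1) (Finset.mem_range.mpr (by omega)) hb1,
          mul_zero, mul_zero]
      · -- j ≥ 1 : merge
        have hn2 : 2 ≤ n := by omega
        set a2 : ℕ → A := fun k =>
          if k < j - 1 then a k else if k = j - 1 then a (j - 1) * a j else a (k + 1) with ha2def
        set b2 : ℕ → A := fun k => if k < j then b k else b (k + 1) with hb2def
        have ha2mem : ∀ k < n - 1, a2 k ∈ I₁ := by
          intro k hk
          simp only [ha2def]
          by_cases h1 : k < j - 1
          · rw [if_pos h1]; exact ha _ (by omega)
          · rw [if_neg h1]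
            by_cases h2 : k = j - 1
            · rw [if_pos h2]
              exact (hI₁mul _ (ha j (by omega)) _ (hI₁sub (ha (j - 1) (by omega)))).1
            · rw [if_neg h2]; exact ha _ (by omega)
        have hb2mem : ∀ k < n - 1 + 1, b2 k ∈ A₂ := by
          intro k hk
          simp only [hb2def]
          by_cases h1 : k < j
          · rw [if_pos h1]; exact hb _ (by omega)
          · rw [if_neg h1]; exact hb _ (by omega)
        have hb2n : b2 (n - 1) = b n := by
          simp only [hb2def]
          rw [if_neg (show ¬ (n - 1 < j) by omega)]
          congr 1
          omega
        have hmerge : Pr (fun k => b k * a k) j *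
            (a j * Pr (fun k => b (j + 1 + k) * a (j + 1 + k)) (n - j - 1))
            = Pr (fun k => b2 k * a2 k) (n - 1) := by
          rw [Pr_split (fun k => b2 k * a2 k) (show j - 1 < n - 1 by omega)]
          have e1 : Pr (fun k => b2 k * a2 k) (j - 1) = Pr (fun k => b k * a k) (j - 1) := by
            apply Pr_congr
            intro k hk
            simp only [hb2def, ha2def]
            simp only [if_pos (show k < j by omega), if_pos (show k < j - 1 by omega)]
          have e2 : b2 (j - 1) * a2 (j - 1) = b (j - 1) * (a (j - 1) * a j) := by
            simp only [hb2def, ha2def]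
            simp only [if_pos (show j - 1 < j by omega), if_neg (lt_irrefl (j - 1)),
              if_pos rfl, if_true]
          have e3 : Pr (fun k => b2 (j - 1 + 1 + k) * a2 (j - 1 + 1 + k)) ((n - 1) - (j - 1) - 1)
              = Pr (fun k => b (j + 1 + k) * a (j + 1 + k)) (n - j - 1) := by
            rw [show (n - 1) - (j - 1) - 1 = n - j - 1 from by omega]
            apply Pr_congr
            intro k hk
            simp only [hb2def, ha2def]
            rw [if_neg (show ¬ (j - 1 + 1 + k < j) by omega),
              if_neg (show ¬ (j - 1 + 1 + k < j - 1) by omega),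
              if_neg (show ¬ (j - 1 + 1 + k = j - 1) by omega)]
            congr 2 <;> omega
          rw [e1, e2, e3]
          have e4 : Pr (fun k => b k * a k) j
              = Pr (fun k => b k * a k) (j - 1) * (b (j - 1) * a (j - 1)) := by
            conv_lhs => rw [show j = (j - 1) + 1 from by omega, Pr_succ]
          rw [e4]
          simp only [mul_assoc]
        have haprod : Pr a2 (n - 1) = Pr a n := by
          rw [Pr_split a2 (show j - 1 < n - 1 by omega),
            Pr_split2 a (show (j - 1) + 1 < n by omega)]
          have e1 : Pr a2 (j - 1) = Pr a (j - 1) := by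
            apply Pr_congr
            intro k hk
            simp only [ha2def]
            simp only [if_pos (show k < j - 1 by omega)]
          have e2 : a2 (j - 1) = a (j - 1) * a j := by
            simp only [ha2def]
            simp only [if_neg (lt_irrefl (j - 1)), if_pos rfl, if_true]
          have e3 : Pr (fun k => a2 (j - 1 + 1 + k)) ((n - 1) - (j - 1) - 1)
              = Pr (fun k => a (j - 1 + 2 + k)) (n - (j - 1) - 2) := by
            rw [show (n - 1) - (j - 1) - 1 = n - (j - 1) - 2 from by omega]
            apply Pr_congr
            intro k hk
            simp only [ha2def]
            rw [if_neg (show ¬ (j - 1 + 1 + k < j - 1) by omega),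
              if_neg (show ¬ (j - 1 + 1 + k = j - 1) by omega)]
            congr 1
            omega
          rw [e1, e2, e3, show j - 1 + 1 = j from by omega]
          simp only [mul_assoc]
        have hbprod : ∏ k ∈ Finset.range (n - 1 + 1), φ (b2 k)
            = (∏ k ∈ Finset.range j, φ (b k)) *
              ∏ k ∈ Finset.range (n - j), φ (b (j + 1 + k)) := by
          rw [show n - 1 + 1 = j + (n - j) from by omega, Finset.prod_range_add]
          congr 1
          · apply Finset.prod_congr rfl
            intro k hk
            simp only [hb2def]
            rw [if_pos (show k < j from Finset.mem_range.mp hk)]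
          · apply Finset.prod_congr rfl
            intro k _
            simp only [hb2def]
            rw [if_neg (show ¬ (j + k < j) by omega)]
            congr 2
            omega
        rw [hmerge, show b n = b2 (n - 1) from hb2n.symm,
          IH (n - 1) (by omega) (by omega) a2 b2 ha2mem hb2mem, haprod, hbprod,
          prod_del (fun k => φ (b k)) (show j < n + 1 by omega), hφbj,
          show n + 1 - j - 1 = n - j from by omega]
        ring

theorem final
    (hτ1 : τ 1 = 1)
    (hcfree : CFree τ φ A₁ A₂)
    (hφτ : ∀ x ∈ A₂, φ x = τ x)
    (hI₁sub : I₁ ⊆ (A₁ : Set A))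
    (hI₁mul : ∀ x ∈ I₁, ∀ y ∈ A₁, y * x ∈ I₁ ∧ x * y ∈ I₁)
    (hI₁ker : ∀ x ∈ I₁, τ x = 0) :
    ∀ (n : ℕ) (a b : ℕ → A), 0 < n →
      (∀ k < n, a k ∈ I₁) → (∀ k ≤ n, b k ∈ A₂) →
      φ (b 0 * ((List.range n).map (fun k => a k * b (k + 1))).prod) =
        φ (((List.range n).map a).prod) * ∏ k ∈ Finset.range (n + 1), φ (b k) := by
  intro n a b hn ha hb
  have e3 : ∀ m, b 0 * Pr (fun k => a k * b (k + 1)) m = Pr (fun k => b k * a k) m * b m := by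
    intro m
    induction m with
    | zero => rw [Pr_zero, Pr_zero, mul_one, one_mul]
    | succ m IHm =>
        rw [Pr_succ, Pr_succ, ← mul_assoc, IHm]
        simp only [mul_assoc]
  show φ (b 0 * Pr (fun k => a k * b (k + 1)) n) = φ (Pr a n) * ∏ k ∈ Finset.range (n + 1), φ (b k)
  rw [e3]
  exact Plem τ φ A₁ A₂ I₁ hτ1 hcfree hφτ hI₁sub hI₁mul hI₁ker n hn a b ha
    (fun k hk => hb k (by omega))

end Main
end CFMI



open scoped BigOperators

/-- (Franz) If `A₁, A₂` are conditionally free with respect to `(τ, φ)`,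
`φ` coincides with `τ` on `A₂`, and `I₁` is an ideal of `A₁` with `I₁ ⊆ ker τ`, then the
pair `(I₁, A₂)` is monotonically independent with respect to `φ`. -/
theorem conditionally_free_implies_monotone_independent
    {A : Type*} [Ring A] [Algebra ℂ A]
    (τ φ : A →ₗ[ℂ] ℂ) (hτ1 : τ 1 = 1) (hφ1 : φ 1 = 1)
    (A₁ A₂ : Subalgebra ℂ A)
    -- conditional freeness of `A₁` and `A₂` with respect to `(τ, φ)`
    (hcfree : ∀ (n : ℕ) (a : ℕ → A) (i : ℕ → Bool), 1 < n →
        (∀ k < n, a k ∈ (if i k then A₁ else A₂)) →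
        (∀ k, k + 1 < n → i k ≠ i (k + 1)) →
        (∀ k < n, τ (a k) = 0) →
        τ (((List.range n).map a).prod) = 0 ∧
        φ (((List.range n).map a).prod) = ∏ k ∈ Finset.range n, φ (a k))
    -- `φ` coincides with `τ` on `A₂`
    (hφτ : ∀ a ∈ A₂, φ a = τ a)
    -- `I₁` an ideal of `A₁` with `I₁ ⊆ ker τ`
    (I₁ : Set A)
    (hI₁sub : I₁ ⊆ (A₁ : Set A)) (hI₁0 : (0 : A) ∈ I₁)
    (hI₁add : ∀ x ∈ I₁, ∀ y ∈ I₁, x + y ∈ I₁)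
    (hI₁mul : ∀ x ∈ I₁, ∀ a ∈ A₁, a * x ∈ I₁ ∧ x * a ∈ I₁)
    (hI₁ker : ∀ x ∈ I₁, τ x = 0) :
    -- monotone independence of `(I₁, A₂)` with respect to `φ`
    ∀ (n : ℕ) (a b : ℕ → A), 0 < n →
      (∀ k < n, a k ∈ I₁) → (∀ k ≤ n, b k ∈ A₂) →
      φ (b 0 * ((List.range n).map (fun k => a k * b (k + 1))).prod) =
        φ (((List.range n).map a).prod) * ∏ k ∈ Finset.range (n + 1), φ (b k) := by
  exact CFMI.final τ φ A₁ A₂ I₁ hτ1 hcfree hφτ hI₁sub hI₁mul hI₁ker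
end

section
/- Let (C, τ) be a non-commutative probability space generated by a subalgebra A and a unital subalgebra B, I the span of elements b₀a₁b₁⋯aₙbₙ (a_i ∈ A, b_i ∈ B), and ω : I → ℂ linear such that the pair (A, B) is cyclically monotone with respect to (ω, τ). Let p ∈ A with ω(p) ≠ 0 and define φ(c) := ω(pc)/ω(p). Then φ coincides with τ on B, and (A, B) is monotonically independent with respect to φ. -/
open scoped BigOperators

/-- If the pair `(A, B)` is cyclically monotone with respect to `(ω, τ)` in
`(C, τ)` and `p ∈ A` satisfies `ω(p) ≠ 0`, then `φ(c) := ω(p c)/ω(p)` coincides with `τ` on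
`B` and `(A, B)` is monotonically independent with respect to `φ`. -/
theorem cyclically_monotone_implies_monotone_independent
    {C : Type*} [Ring C] [Algebra ℂ C]
    (τ : C →ₗ[ℂ] ℂ) (hτ1 : τ 1 = 1)
    (A : NonUnitalSubalgebra ℂ C) (B : Subalgebra ℂ C)
    (hgen : Algebra.adjoin ℂ ((A : Set C) ∪ (B : Set C)) = ⊤)
    (ω : C →ₗ[ℂ] ℂ)
    -- cyclic monotone independence of `(A, B)` with respect to `(ω, τ)`
    (hcm : ∀ (n : ℕ) (a b : ℕ → C), 0 < n →
      (∀ k < n, a k ∈ A) → (∀ k ≤ n, b k ∈ B) →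
      ω (b 0 * ((List.range n).map (fun k => a k * b (k + 1))).prod) =
        ω (((List.range n).map a).prod) *
          (∏ k ∈ Finset.Ico 1 n, τ (b k)) * τ (b 0 * b n))
    (p : C) (hp : p ∈ A) (hωp : ω p ≠ 0) :
    -- `φ(c) := ω(p c)/ω(p)` coincides with `τ` on `B`
    (∀ b ∈ B, ω (p * b) / ω p = τ b) ∧
    -- monotone independence of `(A, B)` with respect to `φ`
    (∀ (n : ℕ) (a b : ℕ → C), 0 < n →
      (∀ k < n, a k ∈ A) → (∀ k ≤ n, b k ∈ B) →
      ω (p * (b 0 * ((List.range n).map (fun k => a k * b (k + 1))).prod)) / ω p =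
        (ω (p * ((List.range n).map a).prod) / ω p) *
          ∏ k ∈ Finset.range (n + 1), (ω (p * b k) / ω p)) := by
  have key : ∀ b' ∈ B, ω (p * b') = ω p * τ b' := by
    intro b' hb'
    have h := hcm 1 (fun _ => p) (fun k => if k = 0 then 1 else b')
      one_pos (fun k _ => hp) (fun k _ => by
        rcases k with _ | k
        · simpa using B.one_mem
        · simpa using hb')
    simpa [hτ1] using h
  have key' : ∀ b' ∈ B, ω (p * b') / ω p = τ b' := by
    intro b' hb'
    rw [key b' hb', mul_div_cancel_left₀ _ hωp]
  refine ⟨key', ?_⟩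
  intro n a b hn ha hb
  set a' : ℕ → C := fun k => if k = 0 then p else a (k - 1) with ha'
  set b' : ℕ → C := fun k => if k = 0 then 1 else b (k - 1) with hb'
  have h := hcm (n+1) a' b' (Nat.succ_pos n)
    (fun k hk => by
      rcases k with _ | k
      · simpa [ha'] using hp
      · simpa [ha'] using ha k (by omega))
    (fun k hk => by
      rcases k with _ | k
      · simpa [hb'] using B.one_mem
      · simpa [hb'] using hb k (by omega))
  have lhs_eq : b' 0 * ((List.range (n+1)).map (fun k => a' k * b' (k + 1))).prod
      = p * (b 0 * ((List.range n).map (fun k => a k * b (k + 1))).prod) := by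
    simp [ha', hb', List.range_succ_eq_map, List.map_map, Function.comp_def, Nat.succ_ne_zero, mul_assoc]
  have aprod_eq : ((List.range (n+1)).map a').prod = p * ((List.range n).map a).prod := by
    simp [ha', List.range_succ_eq_map, List.map_map, Function.comp_def, Nat.succ_ne_zero]
  have ico_eq : (∏ k ∈ Finset.Ico 1 (n+1), τ (b' k)) = ∏ k ∈ Finset.range n, τ (b k) := by
    rw [Finset.prod_Ico_eq_prod_range]
    simp [hb']
  have tail_eq : τ (b' 0 * b' (n+1)) = τ (b n) := by
    simp [hb']
  rw [lhs_eq, aprod_eq, ico_eq, tail_eq] at h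
  have prodφ : (∏ k ∈ Finset.range (n + 1), (ω (p * b k) / ω p))
      = (∏ k ∈ Finset.range n, τ (b k)) * τ (b n) := by
    rw [Finset.prod_range_succ, key' (b n) (hb n le_rfl)]
    congr 1
    exact Finset.prod_congr rfl fun k hk => key' (b k) (hb k (by
      simp at hk; omega))
  rw [prodφ, h]
  field_simp
end

section
/- For any permutations α, β ∈ Sₙ and the tensor action of Sₙ on (ℂᴺ)^⊗n, Tr_{n,N}(α ∘ βᵗ) = N^{#(α⁻¹β)}, where #σ is the number of cycles of σ. -/
open scoped TensorProduct
open PiTensorProduct Equiv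

/-- The number of cycles of a permutation, counting fixed points as cycles of length one. -/
noncomputable def numCycles {n : ℕ} (σ : Perm (Fin n)) : ℕ :=
  σ.cycleType.card + (Finset.univ.filter fun x => σ x = x).card

namespace Statement13

variable {n N : ℕ}

/-- The "same cycle" setoid of a permutation. -/
def cycleSetoid (π : Perm (Fin n)) : Setoid (Fin n) :=
  ⟨π.SameCycle, ⟨fun x => Equiv.Perm.SameCycle.refl π x, fun h => h.symm,
    fun h h' => h.trans h'⟩⟩

instance (π : Perm (Fin n)) : DecidableRel (cycleSetoid π).r :=
  fun a b => inferInstanceAs (Decidable (π.SameCycle a b))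

instance (π : Perm (Fin n)) : DecidableRel (fun x y => (cycleSetoid π).r x y) :=
  fun a b => inferInstanceAs (Decidable (π.SameCycle a b))

noncomputable instance (π : Perm (Fin n)) : Fintype (Quotient (cycleSetoid π)) :=
  @Quotient.fintype _ _ (cycleSetoid π)
    (fun a b => inferInstanceAs (Decidable (π.SameCycle a b)))

lemma mk_out_sameCycle (π : Perm (Fin n)) (x : Fin n) :
    π.SameCycle (Quotient.mk (cycleSetoid π) x).out x :=
  @Quotient.mk_out _ (cycleSetoid π) x

lemma sameCycle_fixed {π : Perm (Fin n)} {x y : Fin n} (h : π.SameCycle x y)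
    (hx : π x = x) : y = x := by
  obtain ⟨i, hi⟩ := h
  rw [← hi]
  exact Function.IsFixedPt.perm_zpow hx i

lemma g_comp_zpow {π : Perm (Fin n)} {g : Fin n → Fin N} (hg : ∀ x, g (π x) = g x) :
    ∀ (i : ℤ) (x : Fin n), g ((π ^ i) x) = g x := by
  have hnat : ∀ (τ : Perm (Fin n)), (∀ x, g (τ x) = g x) →
      ∀ (k : ℕ) (x : Fin n), g ((τ ^ k) x) = g x := by
    intro τ hτ k
    induction k with
    | zero => simp
    | succ m ih => intro x; rw [pow_succ, Equiv.Perm.mul_apply, ih, hτ]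
  have hinv : ∀ x, g (π⁻¹ x) = g x := fun x => by
    rw [← hg (π⁻¹ x), ← Equiv.Perm.mul_apply, mul_inv_cancel, Equiv.Perm.one_apply]
  intro i x
  rcases i with k | k
  · simpa using hnat π hg k x
  · rw [zpow_negSucc, ← inv_pow]; exact hnat π⁻¹ hinv (k + 1) x

lemma card_quot (π : Perm (Fin n)) :
    Fintype.card (Quotient (cycleSetoid π)) = numCycles π := by
  classical
  set s := cycleSetoid π with hs
  set P : Quotient s → Prop := fun q => π q.out = q.out with hPdef
  have h1 : Fintype.card {q : Quotient s // P q}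
      = (Finset.univ.filter fun x : Fin n => π x = x).card := by
    rw [← Fintype.card_subtype]
    refine Fintype.card_congr ?_
    refine
      { toFun := fun q => ⟨q.1.out, q.2⟩
        invFun := fun x => ⟨Quotient.mk s x.1, ?_⟩
        left_inv := fun q => Subtype.ext (Quotient.out_eq q.1)
        right_inv := fun x => Subtype.ext
          (sameCycle_fixed ((mk_out_sameCycle π x.1).symm) x.2) }
    have hout : (Quotient.mk s x.1).out = x.1 :=
      sameCycle_fixed ((mk_out_sameCycle π x.1).symm) x.2
    show π (Quotient.mk s x.1).out = (Quotient.mk s x.1).out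
    rw [hout]; exact x.2
  have h2 : Fintype.card {q : Quotient s // ¬ P q} = π.cycleFactorsFinset.card := by
    rw [← Fintype.card_coe]
    have hf : ∀ q : {q : Quotient s // ¬ P q},
        π.cycleOf q.1.out ∈ π.cycleFactorsFinset := fun q =>
      Equiv.Perm.cycleOf_mem_cycleFactorsFinset_iff.2 (Equiv.Perm.mem_support.2 q.2)
    refine Fintype.card_of_bijective (f := fun q => (⟨π.cycleOf q.1.out, hf q⟩ :
      π.cycleFactorsFinset)) ⟨?_, ?_⟩
    · rintro ⟨q, hq⟩ ⟨q', hq'⟩ h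
      have heq : π.cycleOf q.out = π.cycleOf q'.out := congrArg Subtype.val h
      have hmem : q'.out ∈ (π.cycleOf q.out).support := by
        rw [heq]
        exact Equiv.Perm.mem_support_cycleOf_iff.2
          ⟨Equiv.Perm.SameCycle.refl π q'.out, Equiv.Perm.mem_support.2 hq'⟩
      have hsc : π.SameCycle q.out q'.out :=
        (Equiv.Perm.mem_support_cycleOf_iff.1 hmem).1
      have : q = q' := by
        rw [← Quotient.out_eq q, ← Quotient.out_eq q']
        exact Quotient.sound hsc
      exact Subtype.ext this
    · rintro ⟨c, hc⟩
      obtain ⟨x, hx, -⟩ := (Equiv.Perm.mem_cycleFactorsFinset_iff.1 hc).1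
      have hxc : x ∈ c.support := Equiv.Perm.mem_support.2 hx
      have hπx : π x ≠ x := by
        rw [← (Equiv.Perm.mem_cycleFactorsFinset_iff.1 hc).2 x hxc]
        exact hx
      have hnp : ¬ P (Quotient.mk s x) := by
        intro hfix
        have h1 : x = (Quotient.mk s x).out :=
          sameCycle_fixed (mk_out_sameCycle π x) hfix
        exact hπx (by rw [h1]; exact hfix)
      refine ⟨⟨Quotient.mk s x, hnp⟩, ?_⟩
      apply Subtype.ext
      show π.cycleOf (Quotient.mk s x).out = c
      rw [Equiv.Perm.SameCycle.cycleOf_eq (mk_out_sameCycle π x)]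
      exact (Equiv.Perm.cycle_is_cycleOf hxc hc).symm
  have hsplit := Finset.card_filter_add_card_filter_not
    (s := (Finset.univ : Finset (Quotient s))) P
  rw [Finset.card_univ] at hsplit
  have hct : π.cycleType.card = π.cycleFactorsFinset.card := by
    unfold Equiv.Perm.cycleType; simp
  calc Fintype.card (Quotient s)
      = (Finset.univ.filter P).card + (Finset.univ.filter fun a => ¬ P a).card :=
        hsplit.symm
    _ = Fintype.card {q : Quotient s // P q} + Fintype.card {q : Quotient s // ¬ P q} := by
        rw [← Fintype.card_subtype, ← Fintype.card_subtype]
    _ = numCycles π := by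
        rw [h1, h2, numCycles, hct]; omega

lemma card_fixed (π : Perm (Fin n)) :
    (Finset.univ.filter fun g : Fin n → Fin N => ∀ x, g (π x) = g x).card
      = N ^ numCycles π := by
  classical
  set s := cycleSetoid π with hs
  have e1 : {g : Fin n → Fin N // ∀ x, g (π x) = g x} ≃ (Quotient s → Fin N) :=
    { toFun := fun g q => g.1 q.out
      invFun := fun h => ⟨fun x => h (Quotient.mk s x), fun x => by
        have hq : Quotient.mk s (π x) = Quotient.mk s x :=
          Quotient.sound (⟨-1, by simp⟩ : π.SameCycle (π x) x)
        simp only [hq]⟩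
      left_inv := fun g => Subtype.ext (funext fun x => by
        obtain ⟨i, hi⟩ := mk_out_sameCycle π x
        show g.1 (Quotient.mk s x).out = g.1 x
        conv_rhs => rw [← hi]
        exact (g_comp_zpow g.2 i _).symm)
      right_inv := fun h => funext fun q => congrArg h (Quotient.out_eq q) }
  rw [← Fintype.card_subtype]
  rw [Fintype.card_congr e1, Fintype.card_fun, Fintype.card_fin, card_quot]


/-- The multilinear "product of coordinates" map into functions. -/
noncomputable def tmap (n N : ℕ) :
    (⨂[ℂ] _i : Fin n, (Fin N → ℂ)) →ₗ[ℂ] ((Fin n → Fin N) → ℂ) :=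
  PiTensorProduct.lift (MultilinearMap.pi fun f : Fin n → Fin N =>
    (MultilinearMap.mkPiAlgebra ℂ (Fin n) ℂ).compLinearMap fun i => LinearMap.proj (f i))

lemma tmap_tprod (v : Fin n → (Fin N → ℂ)) :
    tmap n N (tprod ℂ v) = fun f => ∏ i, v i (f i) := by
  rw [tmap, PiTensorProduct.lift.tprod]
  rfl

/-- The inverse map, sending the indicator of `f` to the elementary tensor `⊗ᵢ e_{f i}`. -/
noncomputable def gmap (n N : ℕ) :
    ((Fin n → Fin N) → ℂ) →ₗ[ℂ] (⨂[ℂ] _i : Fin n, (Fin N → ℂ)) :=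
  (Pi.basisFun ℂ (Fin n → Fin N)).constr ℂ fun f => tprod ℂ fun i => Pi.single (f i) (1 : ℂ)

lemma tmap_single (f : Fin n → Fin N) :
    tmap n N (tprod ℂ fun i => Pi.single (f i) (1 : ℂ)) = Pi.single f 1 := by
  rw [tmap_tprod]
  funext g
  rw [Pi.single_apply]
  by_cases h : g = f
  · subst h; simp
  · rw [if_neg h]
    obtain ⟨i, hi⟩ := Function.ne_iff.1 h
    exact Finset.prod_eq_zero (Finset.mem_univ i) (by simp [Pi.single_apply, hi])

lemma pi_expand (w : Fin N → ℂ) :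
    w = ∑ k : Fin N, w k • (Pi.single k (1 : ℂ) : Fin N → ℂ) := by
  have : ∀ k, w k • (Pi.single k (1 : ℂ) : Fin N → ℂ) = Pi.single k (w k) := by
    intro k
    rw [← Pi.single_smul, smul_eq_mul, mul_one]
  simp only [this, Finset.univ_sum_single]

lemma gmap_tmap (v : Fin n → (Fin N → ℂ)) :
    gmap n N (tmap n N (tprod ℂ v)) = tprod ℂ v := by
  classical
  have expand : (tprod ℂ (s := fun _ : Fin n => Fin N → ℂ)) v
      = ∑ f : Fin n → Fin N, (∏ i, v i (f i)) •
          PiTensorProduct.tprod ℂ (fun i => Pi.single (f i) (1 : ℂ)) := by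
    conv_lhs => rw [show v = fun i => ∑ k : Fin N, v i k • (Pi.single k (1:ℂ) : Fin N → ℂ)
      from funext fun i => pi_expand (v i)]
    rw [MultilinearMap.map_sum]
    exact Finset.sum_congr rfl fun f _ => MultilinearMap.map_smul_univ _ _ _
  rw [tmap_tprod, expand, gmap]
  rw [Module.Basis.constr_apply_fintype]
  simp [Pi.basisFun_equivFun]

lemma gmap_single (f : Fin n → Fin N) :
    gmap n N (Pi.single f 1) = PiTensorProduct.tprod ℂ fun i => Pi.single (f i) (1 : ℂ) := by
  rw [gmap, ← Pi.basisFun_apply, Module.Basis.constr_basis]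

set_option maxHeartbeats 1000000 in
/-- The tensor power `(ℂᴺ)^{⊗ n}` is linearly equivalent to functions `(Fin n → Fin N) → ℂ`. -/
noncomputable def tensorEquiv (n N : ℕ) :
    (⨂[ℂ] _i : Fin n, (Fin N → ℂ)) ≃ₗ[ℂ] ((Fin n → Fin N) → ℂ) :=
  LinearEquiv.ofLinear (tmap n N) (gmap n N)
    (by
      refine (Pi.basisFun ℂ (Fin n → Fin N)).ext fun f => ?_
      simp only [LinearMap.comp_apply, LinearMap.id_apply, Pi.basisFun_apply]
      rw [gmap_single, tmap_single])
    (by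
      apply PiTensorProduct.ext
      apply MultilinearMap.ext
      intro v
      simp only [LinearMap.compMultilinearMap_apply, LinearMap.comp_apply,
        LinearMap.id_apply]
      exact gmap_tmap v)

lemma tensorEquiv_symm_single (f : Fin n → Fin N) :
    (tensorEquiv n N).symm (Pi.single f 1) = PiTensorProduct.tprod ℂ fun i => Pi.single (f i) (1 : ℂ) := by
  rw [tensorEquiv, LinearEquiv.ofLinear_symm_apply, gmap_single]

set_option maxHeartbeats 1000000 in
lemma conj_eq (α β : Perm (Fin n)) :
    (tensorEquiv n N).conj
      ((PiTensorProduct.reindex ℂ (fun _ : Fin n => Fin N → ℂ) α).toLinearMap.comp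
        (PiTensorProduct.reindex ℂ (fun _ : Fin n => Fin N → ℂ) β⁻¹).toLinearMap)
      = LinearMap.funLeft ℂ ℂ (fun g i => g ((α * β⁻¹) i)) := by
  classical
  refine (Pi.basisFun ℂ (Fin n → Fin N)).ext fun f => ?_
  rw [LinearEquiv.conj_apply, Pi.basisFun_apply]
  simp only [LinearMap.comp_apply, LinearEquiv.coe_coe]
  rw [tensorEquiv_symm_single, PiTensorProduct.reindex_tprod, PiTensorProduct.reindex_tprod]
  rw [tensorEquiv, LinearEquiv.ofLinear_apply]
  have hT := tmap_single (n := n) (N := N) (fun i => f (β (α⁻¹ i)))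
  have harg : (fun i : Fin n => (Pi.single (f (β⁻¹.symm (α.symm i))) (1 : ℂ) : Fin N → ℂ))
      = fun i : Fin n => (Pi.single (f (β (α⁻¹ i))) (1 : ℂ) : Fin N → ℂ) := by
    funext i
    congr 1
  rw [harg, hT]
  funext g
  rw [LinearMap.funLeft_apply, Pi.single_apply, Pi.single_apply]
  refine if_congr ?_ rfl rfl
  constructor
  · intro h
    subst h
    funext i
    simp [Equiv.Perm.mul_apply]
  · intro h
    funext i
    rw [← h]
    simp [Equiv.Perm.mul_apply]

lemma trace_funLeft (h : (Fin n → Fin N) → (Fin n → Fin N)) :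
    LinearMap.trace ℂ ((Fin n → Fin N) → ℂ) (LinearMap.funLeft ℂ ℂ h)
      = ((Finset.univ.filter fun f => h f = f).card : ℂ) := by
  classical
  rw [LinearMap.trace_eq_matrix_trace ℂ (Pi.basisFun ℂ (Fin n → Fin N)), Matrix.trace]
  have hdiag : ∀ f, (LinearMap.toMatrix (Pi.basisFun ℂ (Fin n → Fin N))
      (Pi.basisFun ℂ (Fin n → Fin N)) (LinearMap.funLeft ℂ ℂ h)).diag f
      = if h f = f then (1 : ℂ) else 0 := by
    intro f
    rw [Matrix.diag_apply, LinearMap.toMatrix_apply, Pi.basisFun_repr,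
      LinearMap.funLeft_apply, Pi.basisFun_apply, Pi.single_apply]
  rw [Finset.sum_congr rfl fun f _ => hdiag f, Finset.sum_boole]

end Statement13

/-- For permutations `α, β ∈ Sₙ` acting on `(ℂᴺ)^⊗n` by
`σ·(v₁ ⊗ … ⊗ vₙ) = v_{σ⁻¹(1)} ⊗ … ⊗ v_{σ⁻¹(n)}`, with `βᵗ` (the adjoint of the action of
`β`) being the action of `β⁻¹`, one has `Tr_{n,N}(α ∘ βᵗ) = N^{#(α⁻¹β)}`. -/
theorem trace_of_permutation_operators {n N : ℕ} (α β : Equiv.Perm (Fin n)) :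
    LinearMap.trace ℂ (⨂[ℂ] _i : Fin n, (Fin N → ℂ))
      ((PiTensorProduct.reindex ℂ (fun _ : Fin n => Fin N → ℂ)
          (α : Equiv.Perm (Fin n))).toLinearMap.comp
        (PiTensorProduct.reindex ℂ (fun _ : Fin n => Fin N → ℂ)
          (β⁻¹ : Equiv.Perm (Fin n))).toLinearMap) =
      (N : ℂ) ^ numCycles (α⁻¹ * β) := by
  open Statement13 in
  classical
  rw [← LinearMap.trace_conj' _ (tensorEquiv n N), conj_eq α β, trace_funLeft]
  have hcard : (Finset.univ.filter fun f : Fin n → Fin N =>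
        (fun i => f ((α * β⁻¹) i)) = f).card
      = (Finset.univ.filter fun g : Fin n → Fin N =>
        ∀ x, g ((α⁻¹ * β) x) = g x).card := by
    refine Finset.card_bij' (fun f _ => f ∘ ⇑α) (fun g _ => g ∘ ⇑α⁻¹) ?_ ?_ ?_ ?_
    · intro f hf
      simp only [Finset.mem_filter, Finset.mem_univ, true_and] at hf ⊢
      intro x
      have h1 := congrFun hf (α ((α⁻¹ * β) x))
      simpa [Equiv.Perm.mul_apply, Function.comp] using h1.symm
    · intro g hg
      simp only [Finset.mem_filter, Finset.mem_univ, true_and] at hg ⊢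
      funext i
      have h1 := hg (β⁻¹ i)
      simpa [Equiv.Perm.mul_apply, Function.comp] using h1.symm
    · intro f _; funext i; simp
    · intro g _; funext i; simp
  rw [hcard, card_fixed]
  push_cast
  ring
end
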